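/- Let a₁, a₂ be positive integers coprime to a positive integer b. Then I(a₁,b) ≡ I(a₂,b) (mod b) if and only if 3·s(a₁,b) - 3·s(a₂,b) is an integer. -/

import Mathlib

/-- The sawtooth function ((x)) = x - ⌊x⌋ - 1/2 for non-integer x, and 0 for integer x. -/
def saw (x : ℚ) : ℚ := if x.den = 1 then 0 else x - ⌊x⌋ - 1/2

/-- The Dedekind sum s(a,b) = Σ_{k=1}^{b-1} ((k/b))((ka/b)). -/
def dedekindSum (a b : ℕ) : ℚ :=
  ∑ k ∈ Finset.range b, saw ((k : ℚ) / b) * saw ((k * a : ℚ) / b)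

/-- I(a,b): the number of inversions of the permutation x ↦ ax mod b on {0,...,b-1}. -/
def inv' (a b : ℕ) : ℕ :=
  (((Finset.range b) ×ˢ (Finset.range b)).filter
    (fun p => p.1 < p.2 ∧ (a * p.2) % b < (a * p.1) % b)).card

open Finset

lemma saw_nat_div (m b : ℕ) (hb : 0 < b) (h : ¬ b ∣ m) :
    saw ((m : ℚ) / b) = ((m % b : ℕ) : ℚ) / b - 1/2 := by
  unfold saw
  have hf : ⌊(m : ℚ) / b⌋ = ((m / b : ℕ) : ℤ) := by
    exact_mod_cast Rat.floor_natCast_div_natCast m b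
  rw [if_neg (by rw [Rat.den_div_natCast_eq_one_iff m b hb.ne']; exact h), hf, Int.cast_natCast]
  have hm : (m : ℚ) = b * ((m / b : ℕ) : ℚ) + ((m % b : ℕ) : ℚ) := by
    exact_mod_cast (Nat.div_add_mod m b).symm
  have hb' : (b : ℚ) ≠ 0 := by positivity
  field_simp
  linarith [hm]

lemma saw_zero : saw 0 = 0 := by simp [saw]

lemma injOn_mul_mod (a b : ℕ) (h : Nat.Coprime a b) :
    Set.InjOn (fun k => a * k % b) (Finset.range b) := by
  intro x hx y hy hxy
  simp only [Finset.coe_range, Set.mem_Iio] at hx hy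
  have : x ≡ y [MOD b] :=
    Nat.ModEq.cancel_left_of_coprime (by simpa [Nat.coprime_comm] using h) hxy
  have := this.eq_of_lt_of_lt hx hy
  exact this

lemma image_mul_mod (a b : ℕ) (hb : 0 < b) (h : Nat.Coprime a b) :
    (Finset.range b).image (fun k => a * k % b) = Finset.range b := by
  apply Finset.eq_of_subset_of_card_le
  · intro x hx
    simp only [Finset.mem_image] at hx
    obtain ⟨k, _, rfl⟩ := hx
    exact Finset.mem_range.mpr (Nat.mod_lt _ hb)
  · rw [Finset.card_image_of_injOn (injOn_mul_mod a b h)]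

lemma sum_mod_eqZ {M : Type*} [AddCommMonoid M] (a b : ℕ) (hb : 0 < b) (h : Nat.Coprime a b)
    (g : ℕ → M) : ∑ k ∈ range b, g (a * k % b) = ∑ k ∈ range b, g k := by
  have := Finset.sum_image (s := Finset.range b) (g := fun k => a * k % b) (f := g)
    (fun x hx y hy => injOn_mul_mod a b h (by simpa using hx) (by simpa using hy))
  rw [image_mul_mod a b hb h] at this
  exact this.symm

lemma sum_id_q (n : ℕ) : ∑ k ∈ range n, (k : ℚ) = n * (n - 1) / 2 := by
  induction n with
  | zero => simp
  | succ n ih => rw [sum_range_succ, ih]; push_cast; ring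

lemma ded_eq (a b : ℕ) (hb : 0 < b) (h : Nat.Coprime a b) :
    (b : ℚ)^2 * dedekindSum a b
      = (∑ k ∈ range b, (k : ℚ) * ((a * k % b : ℕ) : ℚ)) - b^2 * (b-1) / 4 := by
  have hb' : (b : ℚ) ≠ 0 := by positivity
  -- pointwise identity on Ico 1 b
  have key : ∀ k ∈ Ico 1 b, (b : ℚ)^2 * (saw ((k : ℚ) / b) * saw ((k * a : ℚ) / b))
      = (k : ℚ) * ((a * k % b : ℕ) : ℚ) - (b/2) * k - (b/2) * ((a * k % b : ℕ) : ℚ) + b^2/4 := by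
    intro k hk
    rw [mem_Ico] at hk
    have hk1 : ¬ b ∣ k := fun hd => by
      have := Nat.le_of_dvd (by omega) hd; omega
    have hk2 : ¬ b ∣ k * a := fun hd => by
      have : b ∣ k := (Nat.Coprime.dvd_of_dvd_mul_right (by simpa [Nat.coprime_comm] using h) hd)
      exact hk1 this
    have e1 : saw ((k : ℚ) / b) = (k : ℚ) / b - 1/2 := by
      rw [saw_nat_div k b hb hk1, Nat.mod_eq_of_lt hk.2]
    have e2 : saw ((k * a : ℚ) / b) = ((a * k % b : ℕ) : ℚ) / b - 1/2 := by
      have : ((k * a : ℕ) : ℚ) = (k : ℚ) * a := by push_cast; ring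
      rw [← this, saw_nat_div (k * a) b hb hk2, Nat.mul_comm k a]
    rw [e1, e2]
    field_simp
    ring
  have split : ∀ f : ℕ → ℚ, ∑ k ∈ range b, f k = f 0 + ∑ k ∈ Ico 1 b, f k := by
    intro f
    rw [range_eq_Ico, Finset.sum_eq_sum_Ico_succ_bot hb]
  have z1 : saw ((0 : ℚ) / b) * saw (((0 : ℕ) * a : ℚ) / b) = 0 := by
    norm_num [saw_zero]
  have hded : (b : ℚ)^2 * dedekindSum a b
      = ∑ k ∈ Ico 1 b, ((k : ℚ) * ((a * k % b : ℕ) : ℚ) - (b/2) * k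
          - (b/2) * ((a * k % b : ℕ) : ℚ) + b^2/4) := by
    rw [dedekindSum, mul_sum, split (fun k => (b:ℚ)^2 * (saw ((k : ℚ) / b) * saw ((k * a : ℚ) / b)))]
    simp only [Nat.cast_zero] at z1 ⊢
    rw [z1, mul_zero, zero_add]
    exact Finset.sum_congr rfl key
  rw [hded]
  have c1 : ∑ _k ∈ Ico 1 b, ((b:ℚ)^2/4) = ((b:ℚ)-1) * (b^2/4) := by
    rw [Finset.sum_const, Nat.card_Ico, nsmul_eq_mul]
    congr 1
    push_cast [Nat.cast_sub hb]
    ring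
  have expand : ∑ k ∈ Ico 1 b, ((k:ℚ) * ((a * k % b : ℕ) : ℚ) - (b/2)*k
        - (b/2)*((a * k % b : ℕ) : ℚ) + b^2/4)
      = (∑ k ∈ Ico 1 b, (k:ℚ) * ((a * k % b : ℕ) : ℚ))
        - (b/2) * (∑ k ∈ Ico 1 b, (k:ℚ))
        - (b/2) * (∑ k ∈ Ico 1 b, ((a * k % b : ℕ) : ℚ)) + ((b:ℚ)-1)*(b^2/4) := by
    rw [sum_add_distrib, sum_sub_distrib, sum_sub_distrib, mul_sum, mul_sum, c1]
  have i1 : ∑ k ∈ Ico 1 b, (k:ℚ) * ((a * k % b : ℕ) : ℚ)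
      = ∑ k ∈ range b, (k:ℚ) * ((a * k % b : ℕ) : ℚ) := by
    rw [split (fun k => (k:ℚ) * ((a * k % b : ℕ) : ℚ))]; norm_num
  have i2 : ∑ k ∈ Ico 1 b, (k:ℚ) = ∑ k ∈ range b, (k:ℚ) := by
    rw [split (fun k => (k:ℚ))]; norm_num
  have i3 : ∑ k ∈ Ico 1 b, ((a * k % b : ℕ) : ℚ) = ∑ k ∈ range b, ((a * k % b : ℕ) : ℚ) := by
    rw [split (fun k => ((a * k % b : ℕ) : ℚ))]; norm_num
  have g2 : ∑ k ∈ range b, ((a * k % b : ℕ) : ℚ) = (b:ℚ) * ((b:ℚ)-1) / 2 := by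
    have := sum_mod_eqZ a b hb h (fun j => (j:ℚ))
    rw [this, sum_id_q]
  rw [expand, i1, i2, i3, sum_id_q, g2]
  ring

-- pointwise indicator identity
lemma indicator_eq (a b i j : ℕ) (hb : 0 < b) (hij : i < j) :
    (if (a * j) % b < (a * i) % b then (1 : ℤ) else 0)
      = ((a * j / b : ℕ) : ℤ) - ((a * i / b : ℕ) : ℤ) - ((a * (j - i) / b : ℕ) : ℤ) := by
  set d := j - i with hd
  have h4 : a * i + a * d = a * j := by
    rw [hd, ← Nat.mul_add, Nat.add_sub_cancel' (Nat.le_of_lt hij)]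
  have h1 : (b : ℤ) * ((a*i/b : ℕ) : ℤ) + ((a*i%b : ℕ) : ℤ) = (a : ℤ) * i := by
    exact_mod_cast Nat.div_add_mod (a*i) b
  have h2 : (b : ℤ) * ((a*j/b : ℕ) : ℤ) + ((a*j%b : ℕ) : ℤ) = (a : ℤ) * j := by
    exact_mod_cast Nat.div_add_mod (a*j) b
  have h3 : (b : ℤ) * ((a*d/b : ℕ) : ℤ) + ((a*d%b : ℕ) : ℤ) = (a : ℤ) * d := by
    exact_mod_cast Nat.div_add_mod (a*d) b
  have h4' : (a : ℤ) * i + (a : ℤ) * d = (a : ℤ) * j := by exact_mod_cast h4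
  have m1 : ((a*i%b : ℕ) : ℤ) < b := by exact_mod_cast Nat.mod_lt _ hb
  have m2 : ((a*j%b : ℕ) : ℤ) < b := by exact_mod_cast Nat.mod_lt _ hb
  have m3 : ((a*d%b : ℕ) : ℤ) < b := by exact_mod_cast Nat.mod_lt _ hb
  have n1 : (0:ℤ) ≤ ((a*i%b : ℕ) : ℤ) := Int.natCast_nonneg _
  have n2 : (0:ℤ) ≤ ((a*j%b : ℕ) : ℤ) := Int.natCast_nonneg _
  have n3 : (0:ℤ) ≤ ((a*d%b : ℕ) : ℤ) := Int.natCast_nonneg _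
  set c : ℤ := ((a*j/b : ℕ) : ℤ) - ((a*i/b : ℕ) : ℤ) - ((a*d/b : ℕ) : ℤ) with hc
  have hbc : (b : ℤ) * c = ((a*i%b : ℕ) : ℤ) + ((a*d%b : ℕ) : ℤ) - ((a*j%b : ℕ) : ℤ) := by
    rw [hc]; linear_combination h2 - h1 - h3 - h4'
  have hb' : (0:ℤ) < b := by exact_mod_cast hb
  have hc0 : (-1 : ℤ) < c := by
    by_contra hcon
    push_neg at hcon
    have : (b:ℤ) * c ≤ b * (-1) := by
      exact mul_le_mul_of_nonneg_left hcon (le_of_lt hb')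
    linarith
  have hc2 : c < 2 := by
    by_contra hcon
    push_neg at hcon
    have : (b:ℤ) * 2 ≤ b * c := by
      exact mul_le_mul_of_nonneg_left hcon (le_of_lt hb')
    linarith
  have hc01 : c = 0 ∨ c = 1 := by omega
  rcases hc01 with h0 | h0
  · rw [h0] at hbc
    rw [if_neg]
    · omega
    · intro hlt
      have : ((a*j%b : ℕ) : ℤ) < ((a*i%b : ℕ) : ℤ) := by exact_mod_cast hlt
      linarith
  · rw [h0] at hbc
    rw [if_pos]
    · omega
    · have : ((a*j%b : ℕ) : ℤ) < ((a*i%b : ℕ) : ℤ) := by linarith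
      exact_mod_cast this

lemma tri (f : ℕ → ℤ) (n : ℕ) :
    ∑ i ∈ range n, ∑ t ∈ range i, f t = ∑ t ∈ range n, ((n:ℤ) - 1 - t) * f t := by
  induction n with
  | zero => simp
  | succ n ih =>
    rw [sum_range_succ, ih, sum_range_succ]
    push_cast
    rw [← sum_add_distrib]
    rw [show ((n:ℤ) + 1 - 1 - n) * f n = 0 by ring, add_zero]
    exact sum_congr rfl fun t _ => by push_cast; ring

lemma sum_id2 (n : ℕ) : 2 * ∑ k ∈ range n, (k : ℤ) = n * (n - 1) := by
  induction n with
  | zero => simp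
  | succ n ih => rw [sum_range_succ]; push_cast; push_cast at ih; linarith

lemma sum_sq6 (n : ℕ) : 6 * ∑ k ∈ range n, (k : ℤ) * k = n * (n - 1) * (2 * n - 1) := by
  induction n with
  | zero => simp
  | succ n ih => rw [sum_range_succ]; push_cast; push_cast at ih; linarith [ih]

lemma inv_eq (a b : ℕ) (hb : 0 < b) (h : Nat.Coprime a b) :
    2 * (b : ℤ) * (inv' a b : ℤ)
      = (2 * b - 1) * b * (b - 1) - 6 * ∑ k ∈ range b, (k : ℤ) * ((a * k % b : ℕ) : ℤ) := by
  set q : ℕ → ℤ := fun x => ((a * x / b : ℕ) : ℤ) with hq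
  set r : ℕ → ℤ := fun x => ((a * x % b : ℕ) : ℤ) with hr
  -- step 1 : inv' as double sum
  have step1 : (inv' a b : ℤ)
      = ∑ i ∈ range b, ∑ j ∈ range b, (if i < j then q j - q i - q (j - i) else 0) := by
    rw [inv', Finset.card_filter]
    push_cast
    rw [Finset.sum_product]
    refine sum_congr rfl fun i _ => sum_congr rfl fun j _ => ?_
    rw [ite_and]
    by_cases hij : i < j
    · rw [if_pos hij, if_pos hij, indicator_eq a b i j hb hij]
    · rw [if_neg hij, if_neg hij]
  -- split into three sums
  have filterlt : ∀ i : ℕ, filter (fun j => i < j) (range b) = Ico (i+1) b := by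
    intro i; ext x; simp [Finset.mem_Ico]; omega
  have hA : ∑ i ∈ range b, ∑ j ∈ range b, (if i < j then q j else 0)
      = ∑ k ∈ range b, (k : ℤ) * q k := by
    rw [Finset.sum_comm]
    refine sum_congr rfl fun j hj => ?_
    rw [← Finset.sum_filter]
    have : filter (fun i => i < j) (range b) = range j := by
      ext x
      simp only [mem_filter, mem_range] at *
      constructor
      · exact fun hx => hx.2
      · exact fun hx => ⟨lt_trans hx hj, hx⟩
    rw [this, Finset.sum_const, nsmul_eq_mul, card_range]
  have hB : ∑ i ∈ range b, ∑ j ∈ range b, (if i < j then q i else 0)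
      = ∑ k ∈ range b, ((b : ℤ) - 1 - k) * q k := by
    refine sum_congr rfl fun i hi => ?_
    rw [← Finset.sum_filter, filterlt i, Finset.sum_const, nsmul_eq_mul, Nat.card_Ico]
    congr 1
    have : i < b := mem_range.mp hi
    push_cast [Nat.cast_sub this]
    ring
  have hC : ∑ i ∈ range b, ∑ j ∈ range b, (if i < j then q (j - i) else 0)
      = ∑ k ∈ range b, ((b : ℤ) - k) * q k := by
    have inner : ∀ i, ∑ j ∈ range b, (if i < j then q (j - i) else 0)
        = ∑ t ∈ range (b - (i + 1)), q (t + 1) := by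
      intro i
      rw [← Finset.sum_filter, filterlt i, Finset.sum_Ico_eq_sum_range]
      exact sum_congr rfl fun t _ => by congr 1; omega
    calc ∑ i ∈ range b, ∑ j ∈ range b, (if i < j then q (j - i) else 0)
        = ∑ i ∈ range b, ∑ t ∈ range (b - 1 - i), q (t + 1) := by
          refine sum_congr rfl fun i _ => ?_
          rw [inner i]
          have e : b - (i + 1) = b - 1 - i := by omega
          rw [e]
      _ = ∑ i ∈ range b, ∑ t ∈ range i, q (t + 1) :=
          Finset.sum_range_reflect (fun i => ∑ t ∈ range i, q (t + 1)) b
      _ = ∑ t ∈ range b, ((b : ℤ) - 1 - t) * q (t + 1) := tri _ b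
      _ = ∑ k ∈ range b, ((b : ℤ) - k) * q k := by
          have e1 : ∑ k ∈ range (b + 1), ((b : ℤ) - k) * q k
              = ∑ t ∈ range b, ((b : ℤ) - 1 - t) * q (t + 1) := by
            rw [Finset.sum_range_succ']
            have hq0 : q 0 = 0 := by simp [hq]
            rw [hq0, mul_zero, add_zero]
            exact sum_congr rfl fun t _ => by push_cast; ring
          have e2 : ∑ k ∈ range (b + 1), ((b : ℤ) - k) * q k
              = ∑ k ∈ range b, ((b : ℤ) - k) * q k := by
            rw [Finset.sum_range_succ]
            simp
          rw [← e1, e2]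
  have stepT : (inv' a b : ℤ) = ∑ k ∈ range b, (3 * (k : ℤ) - 2 * b + 1) * q k := by
    rw [step1]
    have split : ∀ i j : ℕ, (if i < j then q j - q i - q (j - i) else 0)
        = (if i < j then q j else 0) - (if i < j then q i else 0)
          - (if i < j then q (j - i) else 0) := by
      intro i j; split_ifs <;> ring
    have inner : ∀ i ∈ range b, ∑ j ∈ range b, (if i < j then q j - q i - q (j - i) else 0)
        = (∑ j ∈ range b, if i < j then q j else 0)
          - (∑ j ∈ range b, if i < j then q i else 0)
          - (∑ j ∈ range b, if i < j then q (j - i) else 0) := by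
      intro i _
      rw [← sum_sub_distrib, ← sum_sub_distrib]
      exact sum_congr rfl fun j _ => split i j
    rw [sum_congr rfl inner, sum_sub_distrib, sum_sub_distrib, hA, hB, hC,
      ← sum_sub_distrib, ← sum_sub_distrib]
    exact sum_congr rfl fun k _ => by ring
  -- multiply by 2b and use b * q k = a k - r k
  have hbq : ∀ k : ℕ, (b : ℤ) * q k = (a : ℤ) * k - r k := by
    intro k
    have := Nat.div_add_mod (a * k) b
    have h' : (b : ℤ) * ((a * k / b : ℕ) : ℤ) + ((a * k % b : ℕ) : ℤ) = (a : ℤ) * k := by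
      exact_mod_cast this
    simp only [hq, hr]
    linarith
  have hR : ∑ k ∈ range b, r k = ∑ k ∈ range b, (k : ℤ) := by
    simpa [hr] using sum_mod_eqZ a b hb h (fun j => (j : ℤ))
  have s2 := sum_id2 b
  have s6 := sum_sq6 b
  calc 2 * (b : ℤ) * (inv' a b : ℤ)
      = ∑ k ∈ range b, 2 * (3 * (k : ℤ) - 2 * b + 1) * ((b : ℤ) * q k) := by
        rw [stepT, mul_sum]
        exact sum_congr rfl fun k _ => by ring
    _ = ∑ k ∈ range b, 2 * (3 * (k : ℤ) - 2 * b + 1) * ((a : ℤ) * k - r k) := by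
        exact sum_congr rfl fun k _ => by rw [hbq k]
    _ = ∑ k ∈ range b, ((6 * (a : ℤ)) * ((k:ℤ) * k) - (2 * (a:ℤ) * (2 * b - 1)) * k
          - 6 * ((k:ℤ) * r k) + (2 * (2 * (b:ℤ) - 1)) * r k) := by
        exact sum_congr rfl fun k _ => by ring
    _ = (6 * (a : ℤ)) * (∑ k ∈ range b, (k:ℤ) * k)
          - (2 * (a:ℤ) * (2 * b - 1)) * (∑ k ∈ range b, (k:ℤ))
          - 6 * (∑ k ∈ range b, (k:ℤ) * r k)
          + (2 * (2 * (b:ℤ) - 1)) * (∑ k ∈ range b, r k) := by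
        rw [sum_add_distrib, sum_sub_distrib, sum_sub_distrib, mul_sum, mul_sum, mul_sum, mul_sum]
    _ = (2 * b - 1) * b * (b - 1) - 6 * ∑ k ∈ range b, (k : ℤ) * ((a * k % b : ℕ) : ℤ) := by
        rw [hR]
        simp only [hr]
        linear_combination (a : ℤ) * s6 - (a:ℤ) * (2*(b:ℤ)-1) * s2 + (2*(b:ℤ)-1) * s2

lemma master (a b : ℕ) (hb : 0 < b) (h : Nat.Coprime a b) :
    (inv' a b : ℚ) = ((b:ℚ) - 1) * ((b:ℚ) - 2) / 4 - 3 * b * dedekindSum a b := by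
  have hb' : (b : ℚ) ≠ 0 := by positivity
  have h1 := ded_eq a b hb h
  have h2 : 2 * (b:ℚ) * (inv' a b : ℚ)
      = (2*(b:ℚ) - 1) * b * ((b:ℚ) - 1) - 6 * ∑ k ∈ range b, (k:ℚ) * ((a * k % b : ℕ):ℚ) := by
    have := inv_eq a b hb h
    have := congrArg (fun z : ℤ => (z : ℚ)) this
    push_cast at this
    simp only [← Int.natCast_mul, ← Int.natCast_mod, Int.cast_natCast] at this
    convert this using 2 <;> push_cast <;> ring
  apply mul_left_cancel₀ (show (2 * (b:ℚ)) ≠ 0 by positivity)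
  linear_combination h2 + 6 * h1

theorem inv_congr_iff_three_int (a₁ a₂ b : ℕ) (ha₁ : 0 < a₁) (ha₂ : 0 < a₂) (hb : 0 < b)
    (h₁ : Nat.Coprime a₁ b) (h₂ : Nat.Coprime a₂ b) :
    (inv' a₁ b : ℤ) ≡ inv' a₂ b [ZMOD (b : ℤ)] ↔
      ∃ n : ℤ, 3 * dedekindSum a₁ b - 3 * dedekindSum a₂ b = n := by
  have hb' : (b : ℚ) ≠ 0 := by positivity
  have e1 := master a₁ b hb h₁
  have e2 := master a₂ b hb h₂
  set d : ℤ := (inv' a₂ b : ℤ) - (inv' a₁ b : ℤ) with hd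
  have hkey : 3 * dedekindSum a₁ b - 3 * dedekindSum a₂ b = (d : ℚ) / b := by
    have hc : (d : ℚ) = (inv' a₂ b : ℚ) - (inv' a₁ b : ℚ) := by push_cast [hd]; ring
    rw [eq_div_iff hb', hc]
    linear_combination e1 - e2
  constructor
  · intro hm
    obtain ⟨m, hmEq⟩ := Int.ModEq.dvd hm
    refine ⟨m, ?_⟩
    have hdm : d = (b : ℤ) * m := by rw [hd]; exact hmEq
    rw [hkey, hdm]
    push_cast
    field_simp
  · rintro ⟨n, hn⟩
    have hq : (d : ℚ) = (b : ℚ) * n := by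
      rw [hkey] at hn
      field_simp at hn
      linarith
    have hz : d = (b : ℤ) * n := by exact_mod_cast hq
    exact Int.modEq_iff_dvd.mpr ⟨n, by rw [← hd]; exact hz⟩
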